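/- Let Ω ⊂ ℝ³ be a bounded open set satisfying the lower volume-density bound: there exists c > 0 such that the Lebesgue measure of B(x,r) ∩ Ω is at least c·r³ for every x in the closure of Ω and every r ∈ (0,1]. Let α > 0 and s > 0 with α·s ≥ 3, and let f : ℝ³ → ℝ be α-Hölder continuous on the closure of Ω with constant L (i.e. |f(x) − f(x')| ≤ L·‖x − x'‖^α for all x, x' in the closure of Ω), with f(x) > 0 for almost every x ∈ Ω and ∫_Ω f(x)^{−s} dx < ∞. Then there exists ε > 0 such that f(x) ≥ ε for every x in the closure of Ω. -/

import Mathlib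

open MeasureTheory Filter ENNReal

/-- (Core of the Healey–Krömer Corollary.) On a bounded open
set `Ω ⊂ ℝ³` with a lower volume-density bound, an `α`-Hölder continuous
function `f` that is a.e. positive and whose inverse `s`-th power is integrable
(`α·s ≥ 3`) is bounded away from zero on the closure of `Ω`. -/
theorem healey_kroemer_bounded_away_from_zero
    (Ω : Set (EuclideanSpace ℝ (Fin 3))) (hΩ_open : IsOpen Ω)
    (hΩ_bdd : Bornology.IsBounded Ω)
    (c : ℝ) (hc : 0 < c)
    (hdens : ∀ x ∈ closure Ω, ∀ r : ℝ, 0 < r → r ≤ 1 →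
      ENNReal.ofReal (c * r ^ 3) ≤ volume (Metric.ball x r ∩ Ω))
    (α s : ℝ) (hα : 0 < α) (hs : 0 < s) (hαs : 3 ≤ α * s)
    (f : EuclideanSpace ℝ (Fin 3) → ℝ) (L : ℝ)
    (hf_hold : ∀ x ∈ closure Ω, ∀ x' ∈ closure Ω, |f x - f x'| ≤ L * ‖x - x'‖ ^ α)
    (hf_pos : ∀ᵐ x ∂(volume.restrict Ω), 0 < f x)
    (hf_int : ∫⁻ x in Ω, ENNReal.ofReal (f x ^ (-s)) ≠ ⊤) :
    ∃ ε : ℝ, 0 < ε ∧ ∀ x ∈ closure Ω, ε ≤ f x := by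
  by_contra hcon
  push_neg at hcon
  -- replace L by a positive constant
  set L' : ℝ := max L 1 with hL'def
  have hL' : 0 < L' := lt_of_lt_of_le one_pos (le_max_right _ _)
  have hf_hold' : ∀ x ∈ closure Ω, ∀ x' ∈ closure Ω, |f x - f x'| ≤ L' * ‖x - x'‖ ^ α := by
    intro x hx x' hx'
    exact (hf_hold x hx x' hx').trans
      (mul_le_mul_of_nonneg_right (le_max_left _ _) (Real.rpow_nonneg (norm_nonneg _) _))
  -- a sequence in closure Ω with f going to ≤ 0
  have hseq : ∀ n : ℕ, ∃ x ∈ closure Ω, f x < 1 / (n + 1) := by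
    intro n
    obtain ⟨x, hx, hfx⟩ := hcon (1 / (n + 1)) (by positivity)
    exact ⟨x, hx, hfx⟩
  choose u hu hfu using hseq
  have hcomp : IsCompact (closure Ω) :=
    Metric.isCompact_of_isClosed_isBounded isClosed_closure hΩ_bdd.closure
  obtain ⟨x₀, hx₀, φ, hφ, hlim⟩ := hcomp.tendsto_subseq hu
  -- f (u (φ n)) → f x₀
  have hnormlim : Tendsto (fun n => ‖u (φ n) - x₀‖) atTop (nhds 0) := by
    simpa [dist_eq_norm] using (tendsto_iff_dist_tendsto_zero.1 hlim)
  have hrpowlim : Tendsto (fun n => L' * ‖u (φ n) - x₀‖ ^ α) atTop (nhds 0) := by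
    have h0 : Tendsto (fun n => ‖u (φ n) - x₀‖ ^ α) atTop (nhds 0) := by
      have := (Real.continuousAt_rpow_const 0 α (Or.inr hα.le)).tendsto.comp hnormlim
      simpa [Function.comp_def, Real.zero_rpow hα.ne'] using this
    simpa using h0.const_mul L'
  have hflim : Tendsto (fun n => f (u (φ n))) atTop (nhds (f x₀)) := by
    rw [tendsto_iff_dist_tendsto_zero]
    apply squeeze_zero (fun n => dist_nonneg) (fun n => ?_) hrpowlim
    rw [Real.dist_eq]
    exact hf_hold' _ (hu _) _ hx₀
  have hfx₀ : f x₀ ≤ 0 := by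
    have h1 : Tendsto (fun n : ℕ => 1 / ((n : ℝ) + 1)) atTop (nhds 0) :=
      tendsto_one_div_add_atTop_nhds_zero_nat
    refine le_of_tendsto_of_tendsto hflim h1 ?_
    filter_upwards with n
    have h2 : f (u (φ n)) < 1 / ((φ n : ℝ) + 1) := hfu (φ n)
    refine le_trans h2.le ?_
    apply one_div_le_one_div_of_le (by positivity)
    have h3 : (n : ℝ) ≤ (φ n : ℝ) := by exact_mod_cast hφ.id_le n
    linarith
  -- the measure with density f^{-s}
  set g : EuclideanSpace ℝ (Fin 3) → ℝ≥0∞ := fun x => ENNReal.ofReal (f x ^ (-s)) with hgdef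
  set ν : Measure (EuclideanSpace ℝ (Fin 3)) := (volume.restrict Ω).withDensity g with hνdef
  have hνfin : ν Set.univ ≠ ⊤ := by
    rw [hνdef, withDensity_apply _ MeasurableSet.univ, Measure.restrict_univ]
    exact hf_int
  -- key lower bound on small balls
  set K : ℝ≥0∞ := ENNReal.ofReal (c * L' ^ (-s)) with hKdef
  have hKpos : 0 < K := by
    rw [hKdef]
    apply ENNReal.ofReal_pos.2
    have : (0 : ℝ) < L' ^ (-s) := Real.rpow_pos_of_pos hL' _
    positivity
  have hball : ∀ r : ℝ, 0 < r → r ≤ 1 → K ≤ ν (Metric.ball x₀ r) := by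
    intro r hr hr1
    have hBmeas : MeasurableSet (Metric.ball x₀ r ∩ Ω) :=
      measurableSet_ball.inter hΩ_open.measurableSet
    have hν_eq : ν (Metric.ball x₀ r) = ∫⁻ x in Metric.ball x₀ r ∩ Ω, g x ∂volume := by
      rw [hνdef, withDensity_apply _ measurableSet_ball,
        Measure.restrict_restrict measurableSet_ball]
    -- pointwise a.e. bound
    have hpt : ∀ᵐ x ∂(volume.restrict (Metric.ball x₀ r ∩ Ω)),
        ENNReal.ofReal ((L' * r ^ α) ^ (-s)) ≤ g x := by
      have hmem := ae_restrict_mem (μ := volume) hBmeas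
      have hpos : ∀ᵐ x ∂(volume.restrict (Metric.ball x₀ r ∩ Ω)), 0 < f x :=
        ae_restrict_of_ae_restrict_of_subset Set.inter_subset_right hf_pos
      filter_upwards [hmem, hpos] with x hx hfx
      have hxΩ : x ∈ closure Ω := subset_closure hx.2
      have hupper : f x ≤ L' * r ^ α := by
        have h1 : f x - f x₀ ≤ |f x - f x₀| := le_abs_self _
        have h2 : |f x - f x₀| ≤ L' * ‖x - x₀‖ ^ α := hf_hold' x hxΩ x₀ hx₀
        have h3 : ‖x - x₀‖ ^ α ≤ r ^ α := by
          apply Real.rpow_le_rpow (norm_nonneg _) ?_ hα.le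
          have := hx.1
          rw [Metric.mem_ball, dist_eq_norm] at this
          exact this.le
        nlinarith [mul_le_mul_of_nonneg_left h3 hL'.le]
      have hLr : 0 < L' * r ^ α := lt_of_lt_of_le hfx hupper
      have hle : (L' * r ^ α) ^ (-s) ≤ f x ^ (-s) := by
        rw [Real.rpow_neg hLr.le, Real.rpow_neg hfx.le]
        exact inv_anti₀ (Real.rpow_pos_of_pos hfx s)
          (Real.rpow_le_rpow hfx.le hupper hs.le)
      exact ENNReal.ofReal_le_ofReal hle
    have hlow : ENNReal.ofReal ((L' * r ^ α) ^ (-s)) * volume (Metric.ball x₀ r ∩ Ω)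
        ≤ ν (Metric.ball x₀ r) := by
      rw [hν_eq]
      calc ENNReal.ofReal ((L' * r ^ α) ^ (-s)) * volume (Metric.ball x₀ r ∩ Ω)
          = ∫⁻ _ in Metric.ball x₀ r ∩ Ω, ENNReal.ofReal ((L' * r ^ α) ^ (-s)) ∂volume := by
            rw [setLIntegral_const]
        _ ≤ ∫⁻ x in Metric.ball x₀ r ∩ Ω, g x ∂volume := lintegral_mono_ae hpt
    refine le_trans ?_ hlow
    have hvol := hdens x₀ hx₀ r hr hr1
    refine le_trans ?_ (mul_le_mul_right hvol _)
    rw [← ENNReal.ofReal_mul (Real.rpow_nonneg (by positivity) _)]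
    apply ENNReal.ofReal_le_ofReal
    have hrexp : (1 : ℝ) ≤ r ^ ((3 : ℝ) - α * s) := by
      have := Real.rpow_le_rpow_of_exponent_ge hr hr1 (by linarith : (3 : ℝ) - α * s ≤ 0)
      simpa [Real.rpow_zero] using this
    have e1 : (L' * r ^ α) ^ (-s) = L' ^ (-s) * r ^ (α * (-s)) := by
      rw [Real.mul_rpow hL'.le (Real.rpow_nonneg hr.le _), ← Real.rpow_mul hr.le]
    have e2 : (r : ℝ) ^ (3 : ℕ) = r ^ ((3 : ℝ)) := by
      rw [← Real.rpow_natCast r 3]; norm_num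
    calc c * L' ^ (-s) = c * L' ^ (-s) * 1 := by ring
      _ ≤ c * L' ^ (-s) * r ^ ((3 : ℝ) - α * s) := by
          apply mul_le_mul_of_nonneg_left hrexp
          have : (0 : ℝ) < L' ^ (-s) := Real.rpow_pos_of_pos hL' _
          positivity
      _ = (L' * r ^ α) ^ (-s) * (c * r ^ 3) := by
          rw [e1, e2, show (3 : ℝ) - α * s = α * (-s) + 3 by ring,
            Real.rpow_add hr]
          ring
  -- contradiction via continuity from above
  have hmono : Antitone (fun n : ℕ => Metric.ball x₀ (1 / (n + 1))) := by
    intro m n hmn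
    apply Metric.ball_subset_ball
    have h4 : (m : ℝ) ≤ (n : ℝ) := by exact_mod_cast hmn
    apply one_div_le_one_div_of_le (by positivity)
    linarith
  have htend := tendsto_measure_iInter_atTop (μ := ν)
    (fun n => measurableSet_ball.nullMeasurableSet) hmono
    ⟨0, fun h => hνfin (eq_top_iff.2 (h ▸ measure_mono (Set.subset_univ _)))⟩
  have hiInter : (⋂ n : ℕ, Metric.ball x₀ (1 / (n + 1))) = {x₀} := by
    ext y
    simp only [Set.mem_iInter, Metric.mem_ball, Set.mem_singleton_iff]
    constructor
    · intro h
      have hd : dist y x₀ ≤ 0 := by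
        by_contra hd
        push_neg at hd
        obtain ⟨n, hn⟩ := exists_nat_one_div_lt hd
        exact absurd (h n) (not_lt.2 hn.le)
      exact dist_le_zero.1 hd
    · rintro rfl n
      simp only [dist_self]
      positivity
  have hK_le : K ≤ ν {x₀} := by
    rw [← hiInter]
    refine ge_of_tendsto htend ?_
    filter_upwards with n
    exact hball (1 / (n + 1)) (by positivity) (by
      rw [div_le_one (by positivity)]; linarith [Nat.cast_nonneg (α := ℝ) n])
  have hν_sing : ν {x₀} = 0 := by
    rw [hνdef, withDensity_apply _ (measurableSet_singleton x₀)]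
    apply setLIntegral_measure_zero
    rw [Measure.restrict_apply (measurableSet_singleton x₀)]
    exact measure_mono_null Set.inter_subset_left (measure_singleton x₀)
  rw [hν_sing] at hK_le
  exact hKpos.ne' (le_antisymm hK_le zero_le)
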